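/- Let C be a coalgebra with coalgebra filtration {C_n}, A a unital algebra, and f : C → A a linear map vanishing on C_n (n ≥ 0). Then e + f is convolution-invertible (where e(c) = ε(c)·1_A), and its convolution inverse agrees with e − f on C_{n+1}. -/

import Mathlib

open TensorProduct

/-- The convolution product on `Hom_k(C, A)`. -/
noncomputable def conv {k : Type*} [Field k] {C A : Type*}
    [AddCommGroup C] [Module k C] [Coalgebra k C]
    [Ring A] [Algebra k A]
    (f g : C →ₗ[k] A) : C →ₗ[k] A :=
  LinearMap.mul' k A ∘ₗ TensorProduct.map f g ∘ₗ Coalgebra.comul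

/-- The convolution unit `e : c ↦ ε(c)·1_A`. -/
noncomputable def convUnit (k : Type*) [Field k] (C A : Type*)
    [AddCommGroup C] [Module k C] [Coalgebra k C]
    [Ring A] [Algebra k A] : C →ₗ[k] A :=
  Algebra.linearMap k A ∘ₗ (Coalgebra.counit : C →ₗ[k] k)

section ConvAPI

open Coalgebra

variable {k : Type*} [Field k] {C A : Type*}
    [AddCommGroup C] [Module k C] [Coalgebra k C]
    [Ring A] [Algebra k A]

lemma conv_apply' (f g : C →ₗ[k] A) (c : C) {ι : Type*} (r : Coalgebra.Repr k c ι) :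
    conv f g c = ∑ i ∈ r.index, f (r.left i) * g (r.right i) := by
  simp only [conv, LinearMap.comp_apply]
  rw [← r.eq]
  simp [map_sum]

lemma one_conv (h : C →ₗ[k] A) : conv (convUnit k C A) h = h := by
  ext c
  rw [conv_apply' _ _ c (ℛ k c)]
  have key := Coalgebra.sum_counit_tmul_map_eq (R := k) h c (repr := ℛ k c)
  have key2 := congrArg (TensorProduct.lid k A) key
  simp only [map_sum, TensorProduct.lid_tmul, one_smul] at key2
  rw [← key2]
  simp [convUnit, Algebra.smul_def]

lemma conv_one (h : C →ₗ[k] A) : conv h (convUnit k C A) = h := by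
  ext c
  rw [conv_apply' _ _ c (ℛ k c)]
  have key := Coalgebra.sum_map_tmul_counit_eq (R := k) h c (repr := ℛ k c)
  have key2 := congrArg (TensorProduct.rid k A) key
  simp only [map_sum, TensorProduct.rid_tmul, one_smul] at key2
  rw [← key2]
  simp [convUnit, Algebra.smul_def, Algebra.commutes]

lemma conv_add_left (a b h : C →ₗ[k] A) : conv (a + b) h = conv a h + conv b h := by
  ext c
  simp [conv_apply' _ _ c (ℛ k c), add_mul, Finset.sum_add_distrib]

lemma conv_add_right (h a b : C →ₗ[k] A) : conv h (a + b) = conv h a + conv h b := by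
  ext c
  simp [conv_apply' _ _ c (ℛ k c), mul_add, Finset.sum_add_distrib]

lemma conv_smul_left (r : k) (a h : C →ₗ[k] A) : conv (r • a) h = r • conv a h := by
  ext c
  simp [conv_apply' _ _ c (ℛ k c), Finset.smul_sum, smul_mul_assoc]

lemma conv_smul_right (r : k) (h a : C →ₗ[k] A) : conv h (r • a) = r • conv h a := by
  ext c
  simp [conv_apply' _ _ c (ℛ k c), Finset.smul_sum, mul_smul_comm]

lemma conv_assoc (a b c : C →ₗ[k] A) : conv (conv a b) c = conv a (conv b c) := by
  ext x
  have key := Coalgebra.sum_map_tmul_tmul_eq (R := k) a b c x (repr := ℛ k x)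
    (a₁ := fun i => ℛ k ((ℛ k x).left i)) (a₂ := fun i => ℛ k ((ℛ k x).right i))
  have key2 := congrArg (LinearMap.mul' k A ∘ₗ LinearMap.lTensor A (LinearMap.mul' k A)) key
  simp only [map_sum, LinearMap.comp_apply, LinearMap.lTensor_tmul, LinearMap.mul'_apply] at key2
  rw [conv_apply' _ _ x (ℛ k x), conv_apply' _ _ x (ℛ k x)]
  calc ∑ i ∈ (ℛ k x).index, conv a b ((ℛ k x).left i) * c ((ℛ k x).right i)
      = ∑ i ∈ (ℛ k x).index, ∑ j ∈ (ℛ k ((ℛ k x).left i)).index,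
          a ((ℛ k ((ℛ k x).left i)).left j) *
            (b ((ℛ k ((ℛ k x).left i)).right j) * c ((ℛ k x).right i)) := by
        refine Finset.sum_congr rfl fun i _ => ?_
        rw [conv_apply' _ _ _ (ℛ k ((ℛ k x).left i)), Finset.sum_mul]
        simp [mul_assoc]
    _ = ∑ i ∈ (ℛ k x).index, a ((ℛ k x).left i) * conv b c ((ℛ k x).right i) := by
        rw [← key2]
        refine Finset.sum_congr rfl fun i _ => ?_
        rw [conv_apply' _ _ _ (ℛ k ((ℛ k x).right i)), Finset.mul_sum]

/-- Convolution powers of `f` (times the unit). -/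
noncomputable def fpow (f : C →ₗ[k] A) : ℕ → (C →ₗ[k] A)
  | 0 => convUnit k C A
  | j + 1 => conv f (fpow f j)

lemma fpow_one (f : C →ₗ[k] A) : fpow f 1 = f := by
  show conv f (convUnit k C A) = f
  exact conv_one f

lemma fpow_conv_comm (f : C →ₗ[k] A) (j : ℕ) : conv (fpow f j) f = fpow f (j + 1) := by
  induction j with
  | zero => show conv (convUnit k C A) f = conv f (convUnit k C A); rw [one_conv, conv_one]
  | succ j ih =>
      show conv (conv f (fpow f j)) f = conv f (fpow f (j + 1))
      rw [conv_assoc, ih]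

lemma fpow_vanish (F : ℕ → Submodule k C) (hmono : Monotone F)
    (hfilt : ∀ m : ℕ, ∀ c ∈ F m, Coalgebra.comul (R := k) c ∈
      ∑ i ∈ Finset.range (m + 1),
        LinearMap.range (TensorProduct.map (F i).subtype (F (m - i)).subtype))
    (n : ℕ) (f : C →ₗ[k] A) (hf : ∀ c ∈ F n, f c = 0) :
    ∀ j m, m + 1 ≤ j * (n + 1) → ∀ c ∈ F m, fpow f j c = 0 := by
  intro j
  induction j with
  | zero => intro m hm; omega
  | succ j ih =>
      intro m hm c hc
      have hm' : m + 1 ≤ j * (n + 1) + (n + 1) := by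
        calc m + 1 ≤ (j + 1) * (n + 1) := hm
          _ = j * (n + 1) + (n + 1) := by ring
      set L : C ⊗[k] C →ₗ[k] A := LinearMap.mul' k A ∘ₗ TensorProduct.map f (fpow f j) with hL
      have hker : ∀ i ∈ Finset.range (m + 1),
          LinearMap.range (TensorProduct.map (F i).subtype (F (m - i)).subtype)
            ≤ LinearMap.ker L := by
        intro i hi
        rw [Finset.mem_range] at hi
        rintro z ⟨t, rfl⟩
        rw [LinearMap.mem_ker, hL, LinearMap.comp_apply, ← LinearMap.comp_apply
          (TensorProduct.map f (fpow f j)), ← TensorProduct.map_comp]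
        rcases le_or_gt i n with hin | hin
        · have h0 : f ∘ₗ (F i).subtype = 0 :=
            LinearMap.ext fun x => hf x.1 (hmono hin x.2)
          rw [h0, TensorProduct.map_zero_left]
          simp
        · have hkey : m - i + 1 ≤ j * (n + 1) := by
            obtain ⟨J, hJ⟩ : ∃ J, J = j * (n + 1) := ⟨_, rfl⟩
            rw [← hJ] at hm' ⊢
            omega
          have h0 : fpow f j ∘ₗ (F (m - i)).subtype = 0 :=
            LinearMap.ext fun x => ih (m - i) hkey x.1 x.2
          rw [h0, TensorProduct.map_zero_right]
          simp
      have hsum : (∑ i ∈ Finset.range (m + 1),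
          LinearMap.range (TensorProduct.map (F i).subtype (F (m - i)).subtype))
            ≤ LinearMap.ker L := by
        refine Finset.sum_induction _ (fun S => S ≤ LinearMap.ker L) ?_ ?_ hker
        · intro a b ha hb
          rw [Submodule.add_eq_sup]
          exact sup_le ha hb
        · simpa [Submodule.zero_eq_bot] using bot_le
      have hmem := hsum (hfilt m c hc)
      rw [LinearMap.mem_ker] at hmem
      show L (Coalgebra.comul c) = 0
      exact hmem

lemma conv_unit_add_geom (f : C →ₗ[k] A) (m : ℕ) :
    conv (convUnit k C A + f) (∑ j ∈ Finset.range (m + 1), ((-1 : k) ^ j) • fpow f j)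
      = convUnit k C A + ((-1 : k) ^ m) • fpow f (m + 1) := by
  induction m with
  | zero =>
      simp only [Finset.range_one, Finset.sum_singleton, pow_zero, one_smul, zero_add, fpow_one]
      show conv (convUnit k C A + f) (convUnit k C A) = convUnit k C A + f
      rw [conv_add_left, conv_one, conv_one]
  | succ m ih =>
      rw [Finset.sum_range_succ, conv_add_right, ih, conv_smul_right]
      have hstep : conv (convUnit k C A + f) (fpow f (m + 1))
          = fpow f (m + 1) + fpow f (m + 2) := by
        rw [conv_add_left, one_conv]
        rfl
      rw [hstep, pow_succ]
      module

lemma geom_conv_unit_add (f : C →ₗ[k] A) (m : ℕ) :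
    conv (∑ j ∈ Finset.range (m + 1), ((-1 : k) ^ j) • fpow f j) (convUnit k C A + f)
      = convUnit k C A + ((-1 : k) ^ m) • fpow f (m + 1) := by
  induction m with
  | zero =>
      simp only [Finset.range_one, Finset.sum_singleton, pow_zero, one_smul, zero_add, fpow_one]
      show conv (convUnit k C A) (convUnit k C A + f) = convUnit k C A + f
      rw [conv_add_right, one_conv, one_conv]
  | succ m ih =>
      rw [Finset.sum_range_succ, conv_add_left, ih, conv_smul_left]
      have hstep : conv (fpow f (m + 1)) (convUnit k C A + f)
          = fpow f (m + 1) + fpow f (m + 2) := by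
        rw [conv_add_right, conv_one, fpow_conv_comm]
      rw [hstep, pow_succ]
      module

end ConvAPI

/-- Let `{C_n}` be a coalgebra filtration (by subcoalgebras) on `C`, `A` a
unital algebra and `f : C → A` a linear map vanishing on `C_n`. Then `e + f` is
convolution-invertible, and its convolution inverse agrees with `e − f` on `C_{n+1}`. -/
theorem conv_inverse_of_unit_plus_nilpotent {k : Type*} [Field k] {C A : Type*}
    [AddCommGroup C] [Module k C] [Coalgebra k C]
    [Ring A] [Algebra k A]
    (F : ℕ → Submodule k C)
    (hmono : Monotone F)
    (hexh : ⨆ n, F n = ⊤)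
    (hfilt : ∀ m : ℕ, ∀ c ∈ F m, Coalgebra.comul (R := k) c ∈
      ∑ i ∈ Finset.range (m + 1),
        LinearMap.range (TensorProduct.map (F i).subtype (F (m - i)).subtype))
    (hsub : ∀ m : ℕ, ∀ c ∈ F m, Coalgebra.comul (R := k) c ∈
      LinearMap.range (TensorProduct.map (F m).subtype (F m).subtype))
    (n : ℕ) (f : C →ₗ[k] A) (hf : ∀ c ∈ F n, f c = 0) :
    ∃ g : C →ₗ[k] A,
      conv (convUnit k C A + f) g = convUnit k C A ∧
      conv g (convUnit k C A + f) = convUnit k C A ∧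
      ∀ c ∈ F (n + 1), g c = (convUnit k C A - f) c := by
  classical
  have hex : ∀ c : C, ∃ m, c ∈ F m := by
    intro c
    have h1 : c ∈ ⨆ m, F m := hexh.symm ▸ Submodule.mem_top
    exact (Submodule.mem_iSup_of_directed F hmono.directed_le).mp h1
  set Gm : ℕ → (C →ₗ[k] A) :=
    fun m => ∑ j ∈ Finset.range (m + 1), ((-1 : k) ^ j) • fpow f j with hGm
  have hvan : ∀ j m, m + 1 ≤ j * (n + 1) → ∀ c ∈ F m, fpow f j c = 0 :=
    fpow_vanish F hmono hfilt n f hf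
  have hstab : ∀ m m', m ≤ m' → ∀ c ∈ F m, Gm m' c = Gm m c := by
    intro m m' hle c hc
    simp only [hGm, LinearMap.coe_sum, Finset.sum_apply, LinearMap.smul_apply]
    refine (Finset.sum_subset (Finset.range_subset_range.mpr (by omega)) ?_).symm
    intro j hj hj'
    rw [Finset.mem_range] at hj hj'
    have hjv : fpow f j c = 0 := by
      refine hvan j m ?_ c hc
      calc m + 1 ≤ j := by omega
        _ ≤ j * (n + 1) := Nat.le_mul_of_pos_right j (Nat.succ_pos n)
    rw [hjv, smul_zero]
  have hGfind : ∀ (c : C) m, c ∈ F m → Gm (Nat.find (hex c)) c = Gm m c := by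
    intro c m hc
    have h1 := hstab (Nat.find (hex c)) (max m (Nat.find (hex c)))
      (le_max_right _ _) c (Nat.find_spec (hex c))
    have h2 := hstab m (max m (Nat.find (hex c))) (le_max_left _ _) c hc
    exact h1.symm.trans h2
  set g : C →ₗ[k] A :=
    { toFun := fun c => Gm (Nat.find (hex c)) c
      map_add' := by
        intro a b
        obtain ⟨ma, hma⟩ := hex a
        obtain ⟨mb, hmb⟩ := hex b
        have ha' : a ∈ F (max ma mb) := hmono (le_max_left _ _) hma
        have hb' : b ∈ F (max ma mb) := hmono (le_max_right _ _) hmb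
        have hab : a + b ∈ F (max ma mb) := add_mem ha' hb'
        show Gm (Nat.find (hex (a + b))) (a + b)
          = Gm (Nat.find (hex a)) a + Gm (Nat.find (hex b)) b
        rw [hGfind _ _ hab, hGfind _ _ ha', hGfind _ _ hb', map_add]
      map_smul' := by
        intro r a
        obtain ⟨ma, hma⟩ := hex a
        have hra : r • a ∈ F ma := Submodule.smul_mem _ r hma
        show Gm (Nat.find (hex (r • a))) (r • a)
          = (RingHom.id k) r • Gm (Nat.find (hex a)) a
        rw [hGfind _ _ hra, hGfind _ _ hma, map_smul]
        rfl } with hg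
  have hgval : ∀ (c : C) m, c ∈ F m → g c = Gm m c := by
    intro c m hc
    exact hGfind c m hc
  have hcomp : ∀ m : ℕ, g ∘ₗ (F m).subtype = Gm m ∘ₗ (F m).subtype :=
    fun m => LinearMap.ext fun x => hgval x.1 m x.2
  have hconvR : ∀ (h : C →ₗ[k] A) m (c : C), c ∈ F m →
      conv h g c = conv h (Gm m) c := by
    intro h m c hc
    obtain ⟨t, ht⟩ := hsub m c hc
    have e1 : TensorProduct.map h g ∘ₗ TensorProduct.map (F m).subtype (F m).subtype
        = TensorProduct.map h (Gm m) ∘ₗ TensorProduct.map (F m).subtype (F m).subtype := by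
      rw [← TensorProduct.map_comp, ← TensorProduct.map_comp, hcomp]
    simp only [conv, LinearMap.comp_apply]
    rw [← ht, ← LinearMap.comp_apply (TensorProduct.map h g), e1, LinearMap.comp_apply]
  have hconvL : ∀ (h : C →ₗ[k] A) m (c : C), c ∈ F m →
      conv g h c = conv (Gm m) h c := by
    intro h m c hc
    obtain ⟨t, ht⟩ := hsub m c hc
    have e1 : TensorProduct.map g h ∘ₗ TensorProduct.map (F m).subtype (F m).subtype
        = TensorProduct.map (Gm m) h ∘ₗ TensorProduct.map (F m).subtype (F m).subtype := by
      rw [← TensorProduct.map_comp, ← TensorProduct.map_comp, hcomp]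
    simp only [conv, LinearMap.comp_apply]
    rw [← ht, ← LinearMap.comp_apply (TensorProduct.map g h), e1, LinearMap.comp_apply]
  have hvansucc : ∀ m : ℕ, ∀ c ∈ F m, fpow f (m + 1) c = 0 := by
    intro m c hc
    refine hvan (m + 1) m ?_ c hc
    exact Nat.le_mul_of_pos_right (m + 1) (Nat.succ_pos n)
  refine ⟨g, ?_, ?_, ?_⟩
  · ext c
    obtain ⟨m, hm⟩ := hex c
    rw [hconvR _ m c hm]
    have h2 : conv (convUnit k C A + f) (Gm m)
        = convUnit k C A + ((-1 : k) ^ m) • fpow f (m + 1) := conv_unit_add_geom f m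
    rw [h2]
    simp [hvansucc m c hm]
  · ext c
    obtain ⟨m, hm⟩ := hex c
    rw [hconvL _ m c hm]
    have h2 : conv (Gm m) (convUnit k C A + f)
        = convUnit k C A + ((-1 : k) ^ m) • fpow f (m + 1) := geom_conv_unit_add f m
    rw [h2]
    simp [hvansucc m c hm]
  · intro c hc
    rw [hgval c (n + 1) hc]
    simp only [hGm, LinearMap.coe_sum, Finset.sum_apply, LinearMap.smul_apply]
    have hsub2 : Finset.range 2 ⊆ Finset.range (n + 1 + 1) :=
      Finset.range_subset_range.mpr (by omega)
    rw [← Finset.sum_subset hsub2 ?_]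
    · have h1 : fpow f 1 c = f c := by rw [fpow_one]
      have h0 : fpow f 0 c = convUnit k C A c := rfl
      simp [Finset.sum_range_succ, h0, h1, sub_eq_add_neg]
    · intro j hj hj'
      rw [Finset.mem_range] at hj hj'
      have hjv : fpow f j c = 0 := by
        refine hvan j (n + 1) ?_ c hc
        calc n + 1 + 1 ≤ 2 * (n + 1) := by omega
          _ ≤ j * (n + 1) := Nat.mul_le_mul_right (n + 1) (by omega)
      rw [hjv, smul_zero]
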